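/- Let n ≥ 3 and let (1 | m_1, …, m_n) be a normalized reduced class with m_n > 0. If m_1 + ⋯ + m_n < 3 (equivalently, the class pairs positively with −K), then m_1² + ⋯ + m_n² < 1 (equivalently, the class has positive square). (Key inclusion in the proof of Lemma 2.14: 𝓡_n ∩ {d·(−K) > 0} ⊆ {d·d > 0}.) -/
import Mathlib


open Finset

/-- Key inclusion in the proof of Lemma 2.14: a normalized reduced class
`(1 | m_1, …, m_n)` with `m_n > 0` that pairs positively with `-K`
(i.e. `m_1 + ⋯ + m_n < 3`) has positive square (i.e. `m_1² + ⋯ + m_n² < 1`).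
Here `m i` denotes `m_{i+1}`, so `m_1 = m ⟨0,_⟩` etc. -/
theorem reduced_c1_positive_implies_positive_square
    (n : ℕ) (hn : 3 ≤ n) (m : Fin n → ℝ)
    (hmono : Antitone m)
    (hlast : 0 < m ⟨n - 1, by omega⟩)
    (hred : m ⟨0, by omega⟩ + m ⟨1, by omega⟩ + m ⟨2, by omega⟩ ≤ 1)
    (hK : ∑ i, m i < 3) :
    ∑ i, (m i) ^ 2 < 1 := by
  have hpos : ∀ i : Fin n, 0 < m i := by
    intro i
    refine lt_of_lt_of_le hlast (hmono ?_)
    simp only [Fin.le_def]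
    omega
  set f : ℕ → ℝ := fun i => if h : i < n then m ⟨i, h⟩ else 0 with hf
  have hfm : ∀ i : Fin n, m i = f i.val := by
    intro i
    simp [hf, i.isLt]
  have hsplit : ∀ g : ℕ → ℝ,
      ∑ i ∈ Finset.range n, g i = g 0 + g 1 + ∑ i ∈ Finset.Ico 2 n, g i := by
    intro g
    rw [Finset.range_eq_Ico,
      ← Finset.sum_Ico_consecutive g (by omega : 0 ≤ 2) (by omega : 2 ≤ n)]
    have h01 : Finset.Ico 0 2 = ({0, 1} : Finset ℕ) := by decide
    rw [h01, Finset.sum_pair (by omega : (0:ℕ) ≠ 1)]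
  set A := m ⟨0, by omega⟩ with hA
  set B := m ⟨1, by omega⟩ with hB
  set C := m ⟨2, by omega⟩ with hC
  have hfA : f 0 = A := by
    have h0 : (0:ℕ) < n := by omega
    simp [hf, h0, hA]
  have hfB : f 1 = B := by
    have h1 : (1:ℕ) < n := by omega
    simp [hf, h1, hB]
  have hfC : f 2 = C := by
    have h2 : (2:ℕ) < n := by omega
    simp [hf, h2, hC]
  set S := ∑ i ∈ Finset.Ico 2 n, f i with hS
  -- the total linear sum
  have hsum1 : ∑ i, m i = A + B + S := by
    calc ∑ i, m i = ∑ i : Fin n, f i.val := by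
          exact Finset.sum_congr rfl fun i _ => hfm i
      _ = ∑ i ∈ Finset.range n, f i := Fin.sum_univ_eq_sum_range f n
      _ = A + B + S := by rw [hsplit f, hfA, hfB]
  have hS3 : S < 3 - A - B := by rw [hsum1] at hK; linarith
  -- the sum of squares
  have hsum2 : ∑ i, (m i) ^ 2 = A ^ 2 + B ^ 2 + ∑ i ∈ Finset.Ico 2 n, (f i) ^ 2 := by
    calc ∑ i, (m i) ^ 2 = ∑ i : Fin n, (fun j => (f j) ^ 2) i.val := by
          exact Finset.sum_congr rfl fun i _ => by rw [hfm i]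
      _ = ∑ i ∈ Finset.range n, (f i) ^ 2 :=
          Fin.sum_univ_eq_sum_range (fun j => (f j) ^ 2) n
      _ = A ^ 2 + B ^ 2 + ∑ i ∈ Finset.Ico 2 n, (f i) ^ 2 := by
          rw [hsplit (fun j => (f j) ^ 2), hfA, hfB]
  -- basic ordering facts
  have hCpos : 0 < C := hpos _
  have hCB : C ≤ B := hmono (by simp [Fin.le_def])
  have hBA : B ≤ A := hmono (by simp [Fin.le_def])
  -- tail bound
  have htail : ∑ i ∈ Finset.Ico 2 n, (f i) ^ 2 ≤ C * S := by
    rw [hS, Finset.mul_sum]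
    apply Finset.sum_le_sum
    intro i hi
    rw [Finset.mem_Ico] at hi
    have hfi : f i = m ⟨i, hi.2⟩ := by simp [hf, hi.2]
    have h1 : 0 < f i := by rw [hfi]; exact hpos _
    have h2 : f i ≤ C := by
      rw [hfi, hC]
      exact hmono (by simp [Fin.le_def]; omega)
    nlinarith
  have hstrict : C * S < C * (3 - A - B) := by
    exact mul_lt_mul_of_pos_left hS3 hCpos
  have hkey : A ^ 2 + B ^ 2 + C * (3 - A - B) ≤ 1 := by
    nlinarith [sq_nonneg (A - B), sq_nonneg (B - C), sq_nonneg (A + B + C - 1),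
      mul_nonneg (sub_nonneg.2 hBA) hCpos.le, mul_nonneg (sub_nonneg.2 hCB) hCpos.le,
      mul_nonneg (sub_nonneg.2 hBA) (sub_nonneg.2 hCB),
      mul_nonneg (by linarith : (0:ℝ) ≤ 1 - A - B - C) hCpos.le,
      mul_nonneg (by linarith : (0:ℝ) ≤ 1 - A - B - C) (sub_nonneg.2 hCB),
      mul_nonneg (by linarith : (0:ℝ) ≤ 1 - A - B - C) (sub_nonneg.2 hBA)]
  rw [hsum2]
  linarith
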